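/- Let F(X) = X × X and B(X) = the finite powerset of X. Then the category Dialg(F,B) of (F,B)-dialgebras has no final object. -/

import Mathlib

universe u

/-- A dialgebra for `F(X) = X × X` and `B(X) = Pfin(X)` (the finite powerset). -/
structure FinDialg where
  carrier : Type u
  str : carrier × carrier → Finset carrier

/-- Homomorphism condition: `g(h x, h y) = { h z | z ∈ f(x,y) }`. -/
def IsFinDialgHom (X Y : FinDialg.{u}) (h : X.carrier → Y.carrier) : Prop :=
  ∀ x y : X.carrier,
    (↑(Y.str (h x, h y)) : Set Y.carrier) = h '' ↑(X.str (x, y))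

/-- For `F(X) = X × X` and `B(X) = Pfin(X)`, the category of `(F,B)`-dialgebras
has no final object. -/
theorem no_final_dialgebra :
    ¬ ∃ Z : FinDialg.{u}, ∀ X : FinDialg.{u},
        ∃! h : X.carrier → Z.carrier, IsFinDialgHom X Z h := by
  classical
  rintro ⟨Z, hZ⟩
  -- extend Z by a fresh element `none`
  set X : FinDialg.{u} :=
    { carrier := Option Z.carrier
      str := fun p =>
        match p with
        | (some x, some y) => (Z.str (x, y)).image some
        | (some _, none) => {none}
        | (none, some _) => {none}
        | (none, none) => ∅ } with hX
  obtain ⟨h, hhom, huniq⟩ := hZ X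
  obtain ⟨_, _, hZuniq⟩ := hZ Z
  -- h ∘ some is a hom Z → Z, and so is id; hence h ∘ some = id
  have hcomp : IsFinDialgHom Z Z (fun z => h (some z)) := by
    intro x y
    have := hhom (some x) (some y)
    simp only [X] at this
    rw [this, Finset.coe_image, Set.image_image]
  have hid : IsFinDialgHom Z Z id := by
    intro x y; simp
  have heq : (fun z => h (some z)) = id :=
    (hZuniq _ hcomp).trans (hZuniq _ hid).symm
  have hsome : ∀ z, h (some z) = z := fun z => congrFun heq z
  -- contradiction
  have h1 := hhom (some (h none)) none
  have h2 := hhom none none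
  simp only [X, hsome] at h1 h2
  rw [h2] at h1
  have : h none ∈ h '' (↑(∅ : Finset (Option Z.carrier)) : Set (Option Z.carrier)) := by
    rw [h1]; simp
  simp at this
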